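/- arXiv:1602.06779 — 2 statements merged into one kernel-verified Lean document; each statement's English description precedes it below -/
import Mathlib

section
/- Let E and F be groups, with F a free group of finite rank. If f : E → F is a surjective group homomorphism and the rank of E (minimal cardinality of a generating set) equals the rank of F, then f is an isomorphism. -/
open Equiv Function

/-- A partial injection on a finite type extends to a permutation. -/
lemma exists_perm_extend {α : Type*} [Fintype α] [DecidableEq α] (s : Finset α) (g : α → α)
    (hg : Set.InjOn g s) : ∃ π : Equiv.Perm α, ∀ x ∈ s, π x = g x := by
  classical
  let t : Finset α := s.image g
  have hcard : s.card = t.card := (Finset.card_image_of_injOn hg).symm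
  let e : {x // x ∈ s} ≃ {x // x ∈ t} := by
    refine Equiv.ofBijective (fun x => ⟨g x.1, Finset.mem_image_of_mem g x.2⟩) ?_
    rw [Fintype.bijective_iff_injective_and_card]
    constructor
    · intro a b hab
      exact Subtype.ext (hg a.2 b.2 (by simpa using hab))
    · simp [hcard]
  have hcc : Fintype.card {x // ¬ x ∈ s} = Fintype.card {x // ¬ x ∈ t} := by
    simp [Fintype.card_subtype_compl, hcard]
  let e' : {x // ¬ x ∈ s} ≃ {x // ¬ x ∈ t} := Fintype.equivOfCardEq hcc
  refine ⟨((Equiv.sumCompl (· ∈ s)).symm.trans ((e.sumCongr e').trans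
      (Equiv.sumCompl (· ∈ t)))), fun x hx => ?_⟩
  simp [Equiv.sumCompl_symm_apply_of_pos (p := (· ∈ s)) hx, e]


/-- Residual finiteness of free groups: a nontrivial element survives in some
finite symmetric group. -/
lemma freeGroup_exists_perm_hom {ι : Type*} (w : FreeGroup ι) (hw : w ≠ 1) :
    ∃ (k : ℕ) (ψ : FreeGroup ι →* Equiv.Perm (Fin (k + 1))), ψ w ≠ 1 := by
  classical
  set L : List (ι × Bool) := w.toWord with hL
  set k : ℕ := L.length with hk
  have hkpos : 0 < k := by
    rcases Nat.eq_zero_or_pos k with h | h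
    · exact absurd (FreeGroup.toWord_eq_nil_iff.mp (List.length_eq_zero_iff.mp h)) hw
    · exact h
  -- reducedness: no adjacent cancelling pair
  have hred : ∀ j (i : ι) (b : Bool),
      L[j]? = some (i, b) → L[j+1]? = some (i, !b) → False := by
    intro j i b hj hj1
    obtain ⟨hjl, hje⟩ := List.getElem?_eq_some_iff.mp hj
    obtain ⟨hjl1, hje1⟩ := List.getElem?_eq_some_iff.mp hj1
    have hdecomp : L = L.take j ++ (i, b) :: (i, !b) :: L.drop (j+2) := by
      conv_lhs => rw [← List.take_append_drop j L,
        List.drop_eq_getElem_cons (h := hjl), hje,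
        List.drop_eq_getElem_cons (h := hjl1), hje1]
    exact FreeGroup.reduce.not (L₁ := w.toWord) (L₂ := L.take j)
      (L₃ := L.drop (j+2)) (x := i) (b := b)
      (by rw [FreeGroup.reduce_toWord]; exact hdecomp)
  -- partial shift functions
  set Up : ι → Fin (k+1) → Prop :=
    fun i m => ∃ j, L[j]? = some (i, true) ∧ (m : ℕ) = k - 1 - j ∧ j < k with hUp
  set Down : ι → Fin (k+1) → Prop :=
    fun i m => ∃ j, L[j]? = some (i, false) ∧ (m : ℕ) = k - j ∧ j < k with hDown
  set g : ι → Fin (k+1) → Fin (k+1) := fun i m =>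
    if Up i m then ⟨min ((m : ℕ) + 1) k, Nat.lt_succ_of_le (min_le_right _ _)⟩
    else if Down i m then ⟨(m : ℕ) - 1, lt_of_le_of_lt (Nat.sub_le _ _) m.isLt⟩
    else m with hg
  have gUp : ∀ i m, Up i m → (g i m : ℕ) = (m : ℕ) + 1 := by
    intro i m h
    have hb : (m : ℕ) + 1 ≤ k := by obtain ⟨j, -, hm, hjk⟩ := id h; omega
    simp only [hg, if_pos h]
    omega
  have downNotUp : ∀ i m, Down i m → ¬ Up i m := by
    rintro i m ⟨j, hLj, hm, hjk⟩ ⟨j', hLj', hm', hj'k⟩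
    have hj : j = j' + 1 := by omega
    rw [hj] at hLj
    exact hred j' i true hLj' hLj
  have gDown : ∀ i m, Down i m → (g i m : ℕ) = (m : ℕ) - 1 := by
    intro i m h
    simp only [hg, if_neg (downNotUp i m h), if_pos h]
  have hinj : ∀ i, Set.InjOn (g i)
      (Finset.univ.filter (fun m => Up i m ∨ Down i m) : Finset (Fin (k+1))) := by
    intro i m hm m' hm' hgm
    simp only [Finset.coe_filter, Set.mem_setOf_eq, Finset.mem_univ, true_and] at hm hm'
    have hgm' : (g i m : ℕ) = (g i m' : ℕ) := by rw [hgm]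
    rcases hm with hu | hd <;> rcases hm' with hu' | hd'
    · have := gUp i m hu; have := gUp i m' hu'
      exact Fin.ext (by omega)
    · -- Up m, Down m' : leads to cancelling pair (i,false) at j', (i,true) at j'+1
      exfalso
      have e1 := gUp i m hu; have e2 := gDown i m' hd'
      obtain ⟨j, hLj, hmj, hjk⟩ := hu
      obtain ⟨j', hLj', hmj', hj'k⟩ := hd'
      have hj : j = j' + 1 := by omega
      rw [hj] at hLj
      exact hred j' i false hLj' hLj
    · exfalso
      have e1 := gDown i m hd; have e2 := gUp i m' hu'
      obtain ⟨j, hLj, hmj, hjk⟩ := hd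
      obtain ⟨j', hLj', hmj', hj'k⟩ := hu'
      have hj : j' = j + 1 := by omega
      rw [hj] at hLj'
      exact hred j i false hLj hLj'
    · have e1 := gDown i m hd; have e2 := gDown i m' hd'
      obtain ⟨j, hLj, hmj, hjk⟩ := hd
      obtain ⟨j', hLj', hmj', hj'k⟩ := hd'
      exact Fin.ext (by omega)
  choose σ hσ using fun i => exists_perm_extend
    (Finset.univ.filter (fun m => Up i m ∨ Down i m)) (g i) (hinj i)
  set F : ι × Bool → Equiv.Perm (Fin (k+1)) :=
    fun x => cond x.2 (σ x.1) (σ x.1)⁻¹ with hF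
  have key : ∀ n (hn : n ≤ k),
      ((L.drop (k - n)).map F).prod ⟨0, Nat.succ_pos k⟩ = ⟨n, Nat.lt_succ_of_le hn⟩ := by
    intro n
    induction n with
    | zero =>
      intro _
      have hnil : L.drop (k - 0) = [] := by
        rw [Nat.sub_zero, hk]; exact List.drop_length
      rw [hnil]
      simp
    | succ n ih =>
      intro hn
      have hjk : k - (n+1) < k := by omega
      have hjl : k - (n+1) < L.length := by omega
      rw [List.drop_eq_getElem_cons (h := hjl)]
      have hdrop : k - (n+1) + 1 = k - n := by omega
      rw [hdrop, List.map_cons, List.prod_cons, Equiv.Perm.mul_apply, ih (by omega)]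
      have hLjq : L[k - (n+1)]? = some (L[k - (n+1)]'hjl) := List.getElem?_eq_getElem hjl
      rcases hLje : L[k - (n+1)]'hjl with ⟨i, b⟩
      rw [hLje] at hLjq
      rcases b with _ | _
      · -- b = false : need (σ i)⁻¹ ⟨n⟩ = ⟨n+1⟩, i.e. σ i ⟨n+1⟩ = ⟨n⟩
        have hd : Down i ⟨n+1, by omega⟩ := ⟨k - (n+1), hLjq, by simp; omega, hjk⟩
        have hmem : (⟨n+1, by omega⟩ : Fin (k+1)) ∈
            Finset.univ.filter (fun m => Up i m ∨ Down i m) := by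
          simp only [Finset.mem_filter, Finset.mem_univ, true_and]
          exact Or.inr hd
        have hval : σ i ⟨n+1, by omega⟩ = ⟨n, by omega⟩ := by
          rw [hσ i _ hmem]
          refine Fin.ext ?_
          rw [gDown i _ hd]
          simp
        simp only [hF, Bool.cond_false]
        rw [show (⟨n, Nat.lt_succ_of_le (by omega)⟩ : Fin (k+1)) = σ i ⟨n+1, by omega⟩ from hval.symm]
        simp
      · -- b = true : σ i ⟨n⟩ = ⟨n+1⟩
        have hu : Up i ⟨n, by omega⟩ := ⟨k - (n+1), hLjq, by simp; omega, hjk⟩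
        have hmem : (⟨n, by omega⟩ : Fin (k+1)) ∈
            Finset.univ.filter (fun m => Up i m ∨ Down i m) := by
          simp only [Finset.mem_filter, Finset.mem_univ, true_and]
          exact Or.inl hu
        simp only [hF, Bool.cond_true]
        rw [hσ i _ hmem]
        refine Fin.ext ?_
        rw [gUp i _ hu]
  refine ⟨k, FreeGroup.lift σ, fun h1 => ?_⟩
  have h2 : FreeGroup.lift σ w = (L.map F).prod := by
    conv_lhs => rw [← FreeGroup.mk_toWord (x := w)]
    exact FreeGroup.lift_mk
  have h3 := key k le_rfl
  rw [Nat.sub_self, List.drop_zero, ← h2, h1] at h3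
  have : (0 : ℕ) = k := congrArg Fin.val h3
  omega

/-- Finitely generated free groups are Hopfian. -/
lemma freeGroup_hopfian {ι : Type*} [Finite ι] (φ : FreeGroup ι →* FreeGroup ι)
    (hφ : Function.Surjective φ) : Function.Injective φ := by
  rw [injective_iff_map_eq_one]
  intro w hwker
  by_contra hw
  obtain ⟨k, ψ, hψ⟩ := freeGroup_exists_perm_hom w hw
  haveI : Finite (FreeGroup ι →* Equiv.Perm (Fin (k+1))) :=
    Finite.of_equiv _ FreeGroup.lift
  have hinj : Function.Injective
      (fun χ : FreeGroup ι →* Equiv.Perm (Fin (k+1)) => χ.comp φ) := by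
    intro χ₁ χ₂ h
    refine MonoidHom.ext fun x => ?_
    obtain ⟨y, rfl⟩ := hφ x
    exact DFunLike.congr_fun h y
  obtain ⟨χ, hχ⟩ := (Finite.injective_iff_surjective.mp hinj) ψ
  have : ψ w = 1 := by
    rw [← hχ]
    show χ (φ w) = 1
    rw [hwker, map_one]
  exact hψ this

/-- Homomorphisms into a finite group are bounded by the size of a generating set. -/
lemma card_hom_le_of_closure {G : Type*} [Group G] {Q : Type*} [Group Q] [Finite Q]
    (S : Finset G) (hS : Subgroup.closure (S : Set G) = ⊤) :
    Nat.card (G →* Q) ≤ Nat.card Q ^ S.card := by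
  classical
  have hinj : Function.Injective (fun (f : G →* Q) (x : {x // x ∈ S}) => f x) := by
    intro f g h
    refine MonoidHom.eq_of_eqOn_dense hS ?_
    intro x hx
    exact congrFun h ⟨x, hx⟩
  calc Nat.card (G →* Q) ≤ Nat.card ({x // x ∈ S} → Q) :=
        Nat.card_le_card_of_injective _ hinj
    _ = Nat.card Q ^ S.card := by
        rw [Nat.card_fun]
        congr 1
        simp [Nat.card_eq_fintype_card]

/-- The rank of a finitely generated free group equals the cardinality of its basis. -/
lemma nat_card_generators_eq_rank (F : Type*) [Group F] [Group.FG F] [IsFreeGroup F]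
    [Finite (IsFreeGroup.Generators F)] :
    Nat.card (IsFreeGroup.Generators F) = Group.rank F := by
  classical
  haveI : Fintype (IsFreeGroup.Generators F) := Fintype.ofFinite _
  apply le_antisymm
  · -- count homomorphisms into C₂
    obtain ⟨S, hS1, hS2⟩ := Group.rank_spec F
    haveI : Finite (Multiplicative (ZMod 2)) := Finite.of_equiv _ Multiplicative.ofAdd
    have hQ : Nat.card (Multiplicative (ZMod 2)) = 2 :=
      (Nat.card_congr Multiplicative.toAdd).trans (Nat.card_zmod 2)
    have h1 : Nat.card (F →* Multiplicative (ZMod 2)) ≤ 2 ^ S.card := by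
      have := card_hom_le_of_closure (Q := Multiplicative (ZMod 2)) S hS2
      rwa [hQ] at this
    have h2 : Nat.card (F →* Multiplicative (ZMod 2))
        = 2 ^ Nat.card (IsFreeGroup.Generators F) := by
      rw [← Nat.card_congr (IsFreeGroup.lift (H := Multiplicative (ZMod 2))),
        Nat.card_fun, hQ]
    rw [h2, hS1] at h1
    exact (Nat.pow_le_pow_iff_right one_lt_two).mp h1
  · have hclo : Subgroup.closure
        (Set.range (IsFreeGroup.of : IsFreeGroup.Generators F → F)) = ⊤ := by
      have hr : Set.range (IsFreeGroup.of : IsFreeGroup.Generators F → F)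
          = ⇑((IsFreeGroup.mulEquiv F).toMonoidHom) '' Set.range FreeGroup.of := by
        rw [← Set.range_comp]; rfl
      rw [hr, ← MonoidHom.map_closure, FreeGroup.closure_range_of,
        ← MonoidHom.range_eq_map,
        MonoidHom.range_eq_top.mpr (IsFreeGroup.mulEquiv F).surjective]
    have h1 := Group.rank_le (G := F) (S := Finset.univ.image (IsFreeGroup.of))
      (by rw [Finset.coe_image, Finset.coe_univ, Set.image_univ]; exact hclo)
    refine le_trans h1 (le_trans Finset.card_image_le ?_)
    simp [Nat.card_eq_fintype_card]

/-- A surjective homomorphism from a group `E` onto a free group `F`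
of finite rank with `rank E = rank F` is an isomorphism. -/
theorem stmt_1 (E F : Type) [Group E] [Group F] [Group.FG E] [Group.FG F]
    [IsFreeGroup F] [Finite (IsFreeGroup.Generators F)]
    (f : E →* F) (hf : Function.Surjective f)
    (hrank : Group.rank E = Group.rank F) :
    Function.Bijective f := by
  classical
  refine ⟨?_, hf⟩
  have hm : Nat.card (IsFreeGroup.Generators F) = Group.rank F :=
    nat_card_generators_eq_rank F
  obtain ⟨S, hS1, hS2⟩ := Group.rank_spec E
  set ρ : FreeGroup {x // x ∈ S} →* E := FreeGroup.lift Subtype.val with hρdef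
  have hρ : Function.Surjective ρ := by
    rw [← MonoidHom.range_eq_top, hρdef, FreeGroup.range_lift_eq_closure,
      Subtype.range_val]
    exact hS2
  haveI : Fintype (IsFreeGroup.Generators F) := Fintype.ofFinite _
  have hcard : Fintype.card {x // x ∈ S} = Fintype.card (IsFreeGroup.Generators F) := by
    rw [Fintype.card_coe, hS1, hrank, ← hm, Nat.card_eq_fintype_card]
  let e : {x // x ∈ S} ≃ IsFreeGroup.Generators F := Fintype.equivOfCardEq hcard
  set θ : FreeGroup (IsFreeGroup.Generators F) →* FreeGroup (IsFreeGroup.Generators F) :=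
    ((IsFreeGroup.toFreeGroup F).toMonoidHom.comp (f.comp ρ)).comp
      (FreeGroup.freeGroupCongr e.symm).toMonoidHom with hθdef
  have hcollapse : ∀ x, (FreeGroup.map ⇑e.symm) ((FreeGroup.map ⇑e) x) = x := fun x => by
    simpa using (FreeGroup.freeGroupCongr e).symm_apply_apply x
  have hθs : Function.Surjective θ := by
    intro z
    obtain ⟨a, ha⟩ := hf ((IsFreeGroup.toFreeGroup F).symm z)
    obtain ⟨x, rfl⟩ := hρ a
    refine ⟨FreeGroup.freeGroupCongr e x, ?_⟩
    simp [hθdef, ha, hcollapse]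
  have hθi : Function.Injective θ := freeGroup_hopfian θ hθs
  have hfρ : Function.Injective (fun x => f (ρ x)) := by
    intro x y hxy
    have hx : θ (FreeGroup.freeGroupCongr e x) = IsFreeGroup.toFreeGroup F (f (ρ x)) := by
      simp [hθdef, hcollapse]
    have hy : θ (FreeGroup.freeGroupCongr e y) = IsFreeGroup.toFreeGroup F (f (ρ y)) := by
      simp [hθdef, hcollapse]
    have : θ (FreeGroup.freeGroupCongr e x) = θ (FreeGroup.freeGroupCongr e y) := by
      rw [hx, hy]; exact congrArg _ hxy
    exact (FreeGroup.freeGroupCongr e).injective (hθi this)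
  intro a b hab
  obtain ⟨x, rfl⟩ := hρ a
  obtain ⟨y, rfl⟩ := hρ b
  exact congrArg ρ (hfρ hab)
end

section
/- Let f : A → B be a group homomorphism between finitely generated residually finite groups that induces an isomorphism of profinite completions. Then the induced map f_* : A_ab → B_ab on abelianizations is an isomorphism. -/
open Function

/-- Index set for the inverse system: finite-index normal subgroups. -/
def FinNormalSub (G : Type) [Group G] : Type := {N : Subgroup G // N.Normal ∧ N.FiniteIndex}

instance {G : Type} [Group G] (N : FinNormalSub G) : N.1.Normal := N.2.1
instance {G : Type} [Group G] (N : FinNormalSub G) : N.1.FiniteIndex := N.2.2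

/-- The subgroup of compatible families in the product of all finite quotients. -/
def profC (G : Type) [Group G] : Subgroup (∀ N : FinNormalSub G, G ⧸ N.1) where
  carrier := {x | ∀ (N M : FinNormalSub G) (h : N.1 ≤ M.1),
      QuotientGroup.map N.1 M.1 (MonoidHom.id G) (by simpa using h) (x N) = x M}
  one_mem' := by intro N M h; simp
  mul_mem' := by intro a b ha hb N M h; simp [ha N M h, hb N M h]
  inv_mem' := by intro a ha N M h; simp [ha N M h]

/-- The profinite completion of a group, as the inverse limit of its finite quotients. -/
abbrev ProfiniteCompletion (G : Type) [Group G] : Type := ↥(profC G)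

/-- The canonical map of a group into its profinite completion. -/
def toProf (G : Type) [Group G] : G →* ProfiniteCompletion G where
  toFun g := ⟨fun N => QuotientGroup.mk g, by intro N M h; simp⟩
  map_one' := by refine Subtype.ext (funext fun N => ?_); simp
  map_mul' := by intro a b; refine Subtype.ext (funext fun N => ?_); rfl

lemma finiteIndex_comap {G H : Type} [Group G] [Group H] (f : G →* H)
    (M : Subgroup H) [M.Normal] [M.FiniteIndex] : (M.comap f).FiniteIndex := by
  constructor
  rw [Subgroup.index_comap]
  intro h0
  have hdvd := Subgroup.relIndex_dvd_index_of_normal (H := M) (K := f.range)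
  rw [h0] at hdvd
  exact Subgroup.FiniteIndex.index_ne_zero (zero_dvd_iff.mp hdvd)
/-- Pull back a finite-index normal subgroup along a homomorphism. -/
def pullFNS {G H : Type} [Group G] [Group H] (f : G →* H) (M : FinNormalSub H) :
    FinNormalSub G :=
  ⟨M.1.comap f, ⟨Subgroup.normal_comap f, finiteIndex_comap f M.1⟩⟩

/-- The homomorphism of profinite completions induced by a group homomorphism. -/
def profMap {G H : Type} [Group G] [Group H] (f : G →* H) :
    ProfiniteCompletion G →* ProfiniteCompletion H where
  toFun x := ⟨fun M => QuotientGroup.map (M.1.comap f) M.1 f le_rfl (x.1 (pullFNS f M)), by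
    intro M M' h
    have hc : (pullFNS f M).1 ≤ (pullFNS f M').1 := Subgroup.comap_mono h
    beta_reduce
    rw [← x.2 (pullFNS f M) (pullFNS f M') hc]
    generalize x.1 (pullFNS f M) = y
    induction y using QuotientGroup.induction_on with
    | H g => rfl⟩
  map_one' := by refine Subtype.ext (funext fun M => ?_); exact map_one _
  map_mul' := by
    intro a b
    refine Subtype.ext (funext fun M => ?_)
    exact map_mul _ _ _

section Aux

open QuotientGroup
open scoped DirectSum

lemma abelianization_of_surjective (G : Type) [Group G] :
    Function.Surjective (Abelianization.of (G := G)) := fun y => Quotient.exists_rep y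

/-- Projection from the profinite completion to a finite quotient. -/
def projP (G : Type) [Group G] (N : FinNormalSub G) : ProfiniteCompletion G →* G ⧸ N.1 :=
  (Pi.evalMonoidHom _ N).comp (profC G).subtype

lemma profMap_toProf {A B : Type} [Group A] [Group B] (f : A →* B) (a : A) :
    profMap f (toProf A a) = toProf B (f a) := by
  refine Subtype.ext (funext fun M => ?_)
  rfl

/-- Density: the image of `A` hits every coset in every finite quotient of `B`. -/
lemma dense_of_surjective {A B : Type} [Group A] [Group B] (f : A →* B)
    (hf : Function.Surjective (profMap f)) (M : Subgroup B) [M.Normal] [M.FiniteIndex]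
    (b : B) : ∃ a : A, (QuotientGroup.mk (f a) : B ⧸ M) = QuotientGroup.mk b := by
  set Mf : FinNormalSub B := ⟨M, ‹M.Normal›, ‹M.FiniteIndex›⟩
  obtain ⟨x, hx⟩ := hf (toProf B b)
  have h1 : (profMap f x).1 Mf = (toProf B b).1 Mf := by rw [hx]
  have h2 : (profMap f x).1 Mf =
      QuotientGroup.map (Mf.1.comap f) Mf.1 f le_rfl (x.1 (pullFNS f Mf)) := rfl
  obtain ⟨a, ha⟩ := QuotientGroup.mk_surjective (x.1 (pullFNS f Mf))
  refine ⟨a, ?_⟩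
  have : QuotientGroup.map (Mf.1.comap f) Mf.1 f le_rfl (x.1 (pullFNS f Mf))
      = QuotientGroup.mk (f a) := by rw [← ha]; rfl
  rw [← this, ← h2, h1]; rfl

/-- Factorization: every map to a finite group from `A` factors through `f`. -/
lemma factor_of_bijective {A B : Type} [Group A] [Group B] (f : A →* B)
    (hf : Function.Bijective (profMap f)) (Q : Type) [Group Q] [Finite Q]
    (φ : A →* Q) : ∃ ψ : B →* Q, ∀ a : A, ψ (f a) = φ a := by
  haveI : Finite φ.range := Subtype.finite
  set Nf : FinNormalSub A := ⟨φ.ker, inferInstance, inferInstance⟩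
  set E : ProfiniteCompletion A ≃* ProfiniteCompletion B := MulEquiv.ofBijective (profMap f) hf
  refine ⟨(QuotientGroup.kerLift φ).comp ((projP A Nf).comp
    (E.symm.toMonoidHom.comp (toProf B))), fun a => ?_⟩
  have h1 : E.symm (toProf B (f a)) = toProf A a := by
    rw [MulEquiv.symm_apply_eq]
    exact (profMap_toProf f a).symm
  simp only [MonoidHom.comp_apply, MulEquiv.coe_toMonoidHom, h1]
  exact QuotientGroup.kerLift_mk φ a

/-- Residual finiteness of finitely generated abelian groups, additive version. -/
lemma addres (M : Type) [AddCommGroup M] [AddGroup.FG M] (x : M) (hx : x ≠ 0) :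
    ∃ (Q : Type) (_ : AddCommGroup Q) (_ : Finite Q) (φ : M →+ Q), φ x ≠ 0 := by
  obtain ⟨n, ι, fι, p, hp, e, ⟨F⟩⟩ := AddCommGroup.equiv_free_prod_directSum_zmod M
  have hFx : F x ≠ 0 := fun h => hx (by simpa using congrArg F.symm h)
  by_cases h2 : (F x).2 = 0
  · -- first component nonzero
    have h1 : (F x).1 ≠ 0 := fun h => hFx (Prod.ext h h2)
    obtain ⟨j, hj⟩ : ∃ j, (F x).1 j ≠ 0 := by
      by_contra h; push_neg at h
      exact h1 (Finsupp.ext h)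
    set m : ℤ := (F x).1 j with hm
    set k : ℕ := 2 * m.natAbs with hk
    refine ⟨ZMod k, inferInstance, ?_, (Int.castAddHom (ZMod k)).comp
      ((Finsupp.applyAddHom j).comp ((AddMonoidHom.fst _ _).comp F.toAddMonoidHom)), ?_⟩
    · haveI : NeZero k := ⟨by positivity⟩
      infer_instance
    · show (m : ZMod k) ≠ 0
      rw [Ne, ZMod.intCast_zmod_eq_zero_iff_dvd]
      intro hdvd
      have hpos : 0 < m.natAbs := Int.natAbs_pos.mpr hj
      have hle : (k : ℤ) ≤ |m| := Int.le_of_dvd (abs_pos.mpr hj) ((dvd_abs _ _).mpr hdvd)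
      rw [Int.abs_eq_natAbs] at hle
      have hle' : k ≤ m.natAbs := by exact_mod_cast hle
      omega
  · -- torsion component nonzero
    haveI : ∀ i : ι, NeZero (p i ^ e i) :=
      fun i => ⟨pow_ne_zero _ (hp i).pos.ne'⟩
    haveI : Finite (⨁ i : ι, ZMod (p i ^ e i)) :=
      Finite.of_equiv _ DFinsupp.equivFunOnFintype.symm
    exact ⟨⨁ i : ι, ZMod (p i ^ e i), inferInstance, inferInstance,
      (AddMonoidHom.snd _ _).comp F.toAddMonoidHom, h2⟩

/-- Residual finiteness of finitely generated abelian groups, multiplicative version. -/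
lemma mulres (M : Type) [CommGroup M] [Group.FG M] (x : M) (hx : x ≠ 1) :
    ∃ (Q : Type) (_ : CommGroup Q) (_ : Finite Q) (φ : M →* Q), φ x ≠ 1 := by
  haveI : AddGroup.FG (Additive M) := GroupFG.iff_add_fg.mp ‹_›
  obtain ⟨Q, _, _, φ, hφ⟩ := addres (Additive M) (Additive.ofMul x) hx
  exact ⟨Multiplicative Q, inferInstance, inferInstance,
    ⟨⟨fun m => Multiplicative.ofAdd (φ (Additive.ofMul m)), by simp⟩,
      fun a b => by simp [map_add]⟩, hφ⟩

end Aux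

/-- If a homomorphism `f : A → B` between finitely generated
residually finite groups induces an isomorphism of profinite completions, then the
induced map on abelianizations is an isomorphism. -/
theorem stmt_10 (A B : Type) [Group A] [Group B] [Group.FG A] [Group.FG B]
    (hresA : Function.Injective (toProf A)) (hresB : Function.Injective (toProf B))
    (f : A →* B) (hf : Function.Bijective (profMap f)) :
    Function.Bijective (Abelianization.map f) := by
  set g := Abelianization.map f with hg
  constructor
  · rw [injective_iff_map_eq_one]
    intro x hx1
    obtain ⟨a, rfl⟩ := abelianization_of_surjective A x
    by_contra hne
    haveI : Group.FG (Abelianization A) :=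
      Group.fg_of_surjective (abelianization_of_surjective A)
    obtain ⟨Q, _, _, φ, hφ⟩ := mulres (Abelianization A) (Abelianization.of a) hne
    obtain ⟨ψ, hψ⟩ := factor_of_bijective f hf Q (φ.comp Abelianization.of)
    have h1 : φ (Abelianization.of a) = ψ (f a) := (hψ a).symm
    have h2 : ψ (f a) = (Abelianization.lift ψ) (Abelianization.of (f a)) :=
      (Abelianization.lift_apply_of ψ (f a)).symm
    rw [h1, h2, ← Abelianization.map_of, ← hg, hx1, map_one] at hφ
    exact hφ rfl
  · by_contra hsurj
    have hne : g.range ≠ ⊤ := by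
      intro h
      exact hsurj (fun b => by
        have : b ∈ g.range := h ▸ Subgroup.mem_top b
        exact this)
    obtain ⟨x, hx⟩ : ∃ x : Abelianization B, x ∉ g.range := by
      by_contra h; push_neg at h
      exact hne (Subgroup.eq_top_iff' _ |>.mpr h)
    haveI : Group.FG (Abelianization B) :=
      Group.fg_of_surjective (abelianization_of_surjective B)
    haveI : Group.FG (Abelianization B ⧸ g.range) := Group.fg_of_surjective
      (f := QuotientGroup.mk' g.range) (QuotientGroup.mk'_surjective _)
    have hc : (QuotientGroup.mk x : Abelianization B ⧸ g.range) ≠ 1 := by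
      rw [Ne, QuotientGroup.eq_one_iff]; exact hx
    obtain ⟨Q, _, _, φ, hφ⟩ := mulres (Abelianization B ⧸ g.range) (QuotientGroup.mk x) hc
    set ψ : B →* Q := φ.comp ((QuotientGroup.mk' g.range).comp Abelianization.of) with hψdef
    haveI : Finite ψ.range := Subtype.finite
    obtain ⟨b0, hb0⟩ := abelianization_of_surjective B x
    obtain ⟨a, ha⟩ := dense_of_surjective f hf.2 ψ.ker b0
    have hfa : ψ (f a) = 1 := by
      have hin : Abelianization.of (f a) ∈ g.range := ⟨Abelianization.of a,
        (Abelianization.map_of f a).symm ▸ rfl⟩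
      simp only [hψdef, MonoidHom.comp_apply, QuotientGroup.mk'_apply]
      rw [(QuotientGroup.eq_one_iff _).mpr hin, map_one]
    have hker : f a ∈ ψ.ker := hfa
    rw [(QuotientGroup.eq_one_iff (f a)).mpr hker] at ha
    have hb0k : b0 ∈ ψ.ker := (QuotientGroup.eq_one_iff b0).mp ha.symm
    have : ψ b0 = 1 := hb0k
    rw [hψdef] at this
    simp only [MonoidHom.comp_apply, QuotientGroup.mk'_apply, hb0] at this
    exact hφ this
end
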